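/- For 0 < q < 1 and any real a with aq² ≠ 1 (so denominators are nonzero), the series η₀(a;q) := ∑_{n=0}^∞ (-1)^n q^{n(n-1)/2} · ((1 - aq^{2n+1})/(1 - aq)) · ((aq;q)_n/(q;q)_n) converges and equals 0. -/

import Mathlib

/-- The finite q-Pochhammer symbol `(x;q)_n = ∏_{k=0}^{n-1} (1 - x q^k)`. -/
noncomputable def qp (q x : ℝ) (n : ℕ) : ℝ := ∏ k ∈ Finset.range n, (1 - x * q ^ k)

lemma qp_succ (q x : ℝ) (n : ℕ) : qp q x (n+1) = qp q x n * (1 - x * q ^ n) := by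
  simp [qp, Finset.prod_range_succ]

lemma qp_shift (q a : ℝ) (n : ℕ) :
    qp q (a*q) (n+1) = qp q (a*q^2) n * (1 - a*q) := by
  unfold qp
  rw [Finset.prod_range_succ']
  congr 1
  · exact Finset.prod_congr rfl fun k _ => by ring
  · ring

lemma qpq_pos (q : ℝ) (hq0 : 0 < q) (hq1 : q < 1) (n : ℕ) : 0 < qp q q n := by
  apply Finset.prod_pos
  intro k _
  have hk : q ^ k ≤ 1 := pow_le_one₀ hq0.le hq1.le
  nlinarith

lemma qpq_ge (q : ℝ) (hq0 : 0 < q) (hq1 : q < 1) (n : ℕ) : (1-q)^n ≤ qp q q n := by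
  rw [show (1-q)^n = ∏ _k ∈ Finset.range n, (1-q) by simp]
  apply Finset.prod_le_prod
  · intro k _; linarith
  · intro k _
    have hk : q ^ k ≤ 1 := pow_le_one₀ hq0.le hq1.le
    nlinarith

lemma qp_abs_le (q x : ℝ) (hq0 : 0 < q) (hq1 : q < 1) (n : ℕ) :
    |qp q x n| ≤ (1+|x|)^n := by
  rw [show (1+|x|)^n = ∏ _k ∈ Finset.range n, (1+|x|) by simp]
  rw [qp, Finset.abs_prod]
  apply Finset.prod_le_prod
  · intro k _; positivity
  · intro k _
    have hk0 : (0:ℝ) ≤ q ^ k := by positivity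
    have hk : q ^ k ≤ 1 := pow_le_one₀ hq0.le hq1.le
    have h1 : |x * q ^ k| ≤ |x| := by
      rw [abs_mul, abs_of_nonneg hk0]
      nlinarith [abs_nonneg x]
    have h2 := le_abs_self (x * q^k)
    have h3 := neg_abs_le (x * q^k)
    rw [abs_sub_le_iff]
    constructor <;> nlinarith

lemma abs_one_sub_le {x c : ℝ} (hx : |x| ≤ c) : |1 - x| ≤ 1 + c := by
  have h1 := le_abs_self x
  have h2 := neg_abs_le x
  rw [abs_sub_le_iff]
  constructor <;> nlinarith

lemma psum (q a : ℝ) (hq0 : 0 < q) (hq1 : q < 1) (haq : a * q ≠ 1) (N : ℕ) :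
    ∑ i ∈ Finset.range (N+1),
      ((-1 : ℝ) ^ i * q ^ (i * (i - 1) / 2) *
          ((1 - a * q ^ (2 * i + 1)) / (1 - a * q)) *
          (qp q (a * q) i / qp q q i))
      = (-1:ℝ)^N * q ^ (N*(N+1)/2) * qp q (a*q^2) N / qp q q N := by
  have hne : (1:ℝ) - a*q ≠ 0 := sub_ne_zero.mpr (Ne.symm haq)
  induction N with
  | zero =>
      simp [qp, div_self hne]
  | succ N ih =>
      rw [Finset.sum_range_succ, ih]
      have hD : qp q q N ≠ 0 := (qpq_pos q hq0 hq1 N).ne'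
      have hqN : (1:ℝ) - q * q ^ N ≠ 0 := by
        have hk : q ^ N ≤ 1 := pow_le_one₀ hq0.le hq1.le
        have : q * q ^ N < 1 := by nlinarith
        linarith
      rw [qp_succ q q N, qp_succ q (a*q^2) N, qp_shift q a N]
      have he1 : (N+1) * ((N+1) - 1) / 2 = N*(N+1)/2 := by
        simp [Nat.mul_comm]
      have he2 : (N+1) * ((N+1)+1) / 2 = N*(N+1)/2 + (N+1) := by
        rw [show (N+1)*((N+1)+1) = N*(N+1) + 2*(N+1) by ring,
          Nat.add_mul_div_left _ _ (by norm_num : 0 < 2)]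
      rw [he1, he2, pow_add]
      field_simp
      ring

lemma G_summable (q r : ℝ) (hq0 : 0 < q) (hq1 : q < 1) (hr : 0 ≤ r) :
    Summable (fun n : ℕ => r^n * q^(n*(n-1)/2)) := by
  apply summable_of_ratio_norm_eventually_le (r := 1/2) (by norm_num)
  have ht : Filter.Tendsto (fun n : ℕ => r * q ^ n) Filter.atTop (nhds 0) := by
    have := tendsto_pow_atTop_nhds_zero_of_lt_one hq0.le hq1
    simpa using this.const_mul r
  filter_upwards [ht.eventually_le_const (by norm_num : (0:ℝ) < 1/2)] with n hn
  have he : (n+1) * ((n+1) - 1) / 2 = n*(n-1)/2 + n := by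
    rcases n with _ | m
    · simp
    · simp only [Nat.add_sub_cancel, Nat.succ_sub_one]
      rw [show (m+1+1)*(m+1) = (m+1)*m + 2*(m+1) by ring,
        Nat.add_mul_div_left _ _ (by norm_num : 0 < 2)]
  have hG : (0:ℝ) ≤ r^n * q^(n*(n-1)/2) := by positivity
  rw [Real.norm_eq_abs, Real.norm_eq_abs, abs_of_nonneg (by positivity),
    abs_of_nonneg hG, he]
  have heq : r^(n+1) * q^(n*(n-1)/2+n) = (r*q^n) * (r^n * q^(n*(n-1)/2)) := by
    rw [pow_add, pow_succ]; ring
  rw [heq]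
  exact mul_le_mul_of_nonneg_right hn hG

/-- `η₀(a;q) = ∑_{n≥0} (-1)^n q^{n(n-1)/2} ((1-aq^{2n+1})/(1-aq)) ((aq;q)_n/(q;q)_n)`
converges and equals 0. -/
theorem eta_zero_vanishes (q a : ℝ) (hq0 : 0 < q) (hq1 : q < 1)
    (h : a * q ^ 2 ≠ 1) :
    HasSum (fun n : ℕ =>
        (-1 : ℝ) ^ n * q ^ (n * (n - 1) / 2) *
          ((1 - a * q ^ (2 * n + 1)) / (1 - a * q)) *
          (qp q (a * q) n / qp q q n))
      0 := by
  by_cases haq : a * q = 1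
  · have h0 : (1:ℝ) - a * q = 0 := by rw [haq]; ring
    have : (fun n : ℕ =>
        (-1 : ℝ) ^ n * q ^ (n * (n - 1) / 2) *
          ((1 - a * q ^ (2 * n + 1)) / (1 - a * q)) *
          (qp q (a * q) n / qp q q n)) = fun _ => 0 := by
      funext n
      rw [h0, div_zero, mul_zero, zero_mul]
    rw [this]
    exact hasSum_zero
  · set t := fun n : ℕ =>
        (-1 : ℝ) ^ n * q ^ (n * (n - 1) / 2) *
          ((1 - a * q ^ (2 * n + 1)) / (1 - a * q)) *
          (qp q (a * q) n / qp q q n) with ht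
    have hne : (1:ℝ) - a*q ≠ 0 := sub_ne_zero.mpr (Ne.symm haq)
    have hne' : (0:ℝ) < |1 - a*q| := abs_pos.mpr hne
    set r := (1+|a|)/(1-q) with hrdef
    have hr0 : (0:ℝ) ≤ r := by
      apply div_nonneg (by positivity); linarith
    set C := (1+|a|)/|1-a*q| with hCdef
    have hC0 : (0:ℝ) ≤ C := by positivity
    have h1q : (0:ℝ) < 1 - q := by linarith
    -- bound on terms
    have hbound : ∀ n : ℕ, ‖t n‖ ≤ C * (r^n * q^(n*(n-1)/2)) := by
      intro n
      have hDpos := qpq_pos q hq0 hq1 n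
      have heq : |t n| = q ^ (n*(n-1)/2) * (|1 - a*q^(2*n+1)| / |1-a*q|) *
          (|qp q (a*q) n| / qp q q n) := by
        rw [ht]
        simp only [abs_mul, abs_div, abs_pow, abs_neg, abs_one, one_pow, one_mul]
        rw [abs_of_pos hq0, abs_of_pos hDpos]
      rw [Real.norm_eq_abs, heq]
      have b1 : |1 - a*q^(2*n+1)| ≤ 1 + |a| := by
        apply abs_one_sub_le
        rw [abs_mul, abs_of_nonneg (by positivity : (0:ℝ) ≤ q^(2*n+1))]
        nlinarith [abs_nonneg a, pow_le_one₀ hq0.le hq1.le (n := 2*n+1)]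
      have b2 : |qp q (a*q) n| ≤ (1+|a|)^n := by
        refine (qp_abs_le q (a*q) hq0 hq1 n).trans ?_
        apply pow_le_pow_left₀ (by positivity)
        rw [abs_mul, abs_of_nonneg hq0.le]
        nlinarith [abs_nonneg a]
      have b3 : (1-q)^n ≤ qp q q n := qpq_ge q hq0 hq1 n
      calc q ^ (n*(n-1)/2) * (|1 - a*q^(2*n+1)| / |1-a*q|) *
          (|qp q (a*q) n| / qp q q n)
          ≤ q ^ (n*(n-1)/2) * ((1+|a|) / |1-a*q|) * ((1+|a|)^n / (1-q)^n) := by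
            gcongr <;> first | positivity | exact b1 | exact b2 | exact b3
        _ = C * (r^n * q^(n*(n-1)/2)) := by
            rw [hCdef, hrdef, div_pow]; ring
    have hGsum : Summable (fun n : ℕ => r^n * q^(n*(n-1)/2)) :=
      G_summable q r hq0 hq1 hr0
    have hsum : Summable t :=
      Summable.of_norm_bounded (hGsum.mul_left C) hbound
    -- partial sums tend to 0
    have hStendsto : Filter.Tendsto
        (fun N : ℕ => (-1:ℝ)^N * q ^ (N*(N+1)/2) * qp q (a*q^2) N / qp q q N)
        Filter.atTop (nhds 0) := by
      refine squeeze_zero_norm (fun N => ?_) hGsum.tendsto_atTop_zero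
      · have hDpos := qpq_pos q hq0 hq1 N
        have heq : |(-1:ℝ)^N * q ^ (N*(N+1)/2) * qp q (a*q^2) N / qp q q N|
            = q ^ (N*(N+1)/2) * |qp q (a*q^2) N| / qp q q N := by
          simp only [abs_div, abs_mul, abs_pow, abs_neg, abs_one, one_pow, one_mul]
          rw [abs_of_pos hq0, abs_of_pos hDpos]
        rw [Real.norm_eq_abs, heq]
        have b2 : |qp q (a*q^2) N| ≤ (1+|a|)^N := by
          refine (qp_abs_le q (a*q^2) hq0 hq1 N).trans ?_
          apply pow_le_pow_left₀ (by positivity)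
          rw [abs_mul, abs_of_nonneg (by positivity : (0:ℝ) ≤ q^2)]
          nlinarith [abs_nonneg a, pow_le_one₀ hq0.le hq1.le (n := 2)]
        have b3 : (1-q)^N ≤ qp q q N := qpq_ge q hq0 hq1 N
        have hexp : q ^ (N*(N+1)/2) ≤ q ^ (N*(N-1)/2) := by
          apply pow_le_pow_of_le_one hq0.le hq1.le
          apply Nat.div_le_div_right
          apply Nat.mul_le_mul_left
          omega
        calc q ^ (N*(N+1)/2) * |qp q (a*q^2) N| / qp q q N
            ≤ q ^ (N*(N-1)/2) * (1+|a|)^N / (1-q)^N := by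
              gcongr <;> first | positivity | exact hexp | exact b2 | exact b3
          _ = r^N * q^(N*(N-1)/2) := by rw [hrdef, div_pow]; ring
    have h1 : Filter.Tendsto (fun N : ℕ => ∑ i ∈ Finset.range (N+1), t i)
        Filter.atTop (nhds 0) :=
      hStendsto.congr fun N => (psum q a hq0 hq1 haq N).symm
    have h2 : Filter.Tendsto (fun N : ℕ => ∑ i ∈ Finset.range N, t i)
        Filter.atTop (nhds 0) :=
      (Filter.tendsto_add_atTop_iff_nat 1).mp h1
    exact (hsum.hasSum_iff_tendsto_nat).mpr h2
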